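/- Suppose additionally that y < sqrt(1 - (x - 1/2)^2) + sqrt(3)/2 (region R1_2). Then the optimal radius for packings of 2 equal circles satisfies r_2(x,y) = sqrt(x^2 + y^2) * sqrt((x-1)^2 + y^2) / (4y). -/

import Mathlib

noncomputable section

/-- The point `(a, b)` in the Euclidean plane. -/
def pt (a b : ℝ) : EuclideanSpace ℝ (Fin 2) :=
  (WithLp.equiv 2 (Fin 2 → ℝ)).symm ![a, b]

/-- The lattice generated by `v1 = (1,0)` and `v2 = (x,y)`. -/
def TLat (x y : ℝ) : Set (EuclideanSpace ℝ (Fin 2)) :=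
  {v | ∃ m n : ℤ, v = (m : ℝ) • pt 1 0 + (n : ℝ) • pt x y}

/-- `p` is a packing of `k` equal circles of radius `r` on the flat torus `ℝ²/Λ(x,y)`. -/
def IsPacking (x y : ℝ) {k : ℕ} (r : ℝ) (p : Fin k → EuclideanSpace ℝ (Fin 2)) : Prop :=
  ∀ i j : Fin k, ∀ l ∈ TLat x y, (i ≠ j ∨ l ≠ 0) → 2 * r ≤ ‖p i - p j + l‖

/-- The optimal (supremal) radius for packings of `k` equal circles on the torus `ℝ²/Λ(x,y)`. -/
def optRadius (x y : ℝ) (k : ℕ) : ℝ :=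
  sSup {r : ℝ | 0 ≤ r ∧ ∃ p : Fin k → EuclideanSpace ℝ (Fin 2), IsPacking x y r p}

lemma pt_app0 (a b : ℝ) : pt a b 0 = a := rfl
lemma pt_app1 (a b : ℝ) : pt a b 1 = b := rfl

lemma norm_sq_two (v : EuclideanSpace ℝ (Fin 2)) : ‖v‖ = Real.sqrt ((v 0)^2 + (v 1)^2) := by
  rw [EuclideanSpace.norm_eq, Fin.sum_univ_two]
  simp [sq_abs]

lemma shortvec {x y : ℝ} (hxy : 1 ≤ x^2+y^2) (hy : 0 < y) (hx0 : 0 ≤ x) (hx1 : x ≤ 1/2)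
    (m n : ℤ) (h : ¬(m = 0 ∧ n = 0)) : 1 ≤ ((m:ℝ) + n*x)^2 + ((n:ℝ)*y)^2 := by
  have hy2 : 3/4 ≤ y^2 := by nlinarith
  have hn : n ≤ -2 ∨ n = -1 ∨ n = 0 ∨ n = 1 ∨ 2 ≤ n := by omega
  rcases hn with hn | rfl | rfl | rfl | hn
  · have : (n:ℝ) ≤ -2 := by exact_mod_cast hn
    nlinarith [sq_nonneg ((m:ℝ) + n*x), sq_nonneg ((n:ℝ)+2)]
  · have hm : m ≤ -1 ∨ m = 0 ∨ 1 ≤ m := by omega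
    rcases hm with hm | rfl | hm
    · have : (m:ℝ) ≤ -1 := by exact_mod_cast hm
      push_cast
      nlinarith
    · push_cast; nlinarith
    · have : (1:ℝ) ≤ (m:ℝ) := by exact_mod_cast hm
      push_cast
      nlinarith
  · have hm : m ≤ -1 ∨ 1 ≤ m := by omega
    rcases hm with hm | hm
    · have : (m:ℝ) ≤ -1 := by exact_mod_cast hm
      push_cast; nlinarith
    · have : (1:ℝ) ≤ (m:ℝ) := by exact_mod_cast hm
      push_cast; nlinarith
  · have hm : m ≤ -1 ∨ m = 0 ∨ 1 ≤ m := by omega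
    rcases hm with hm | rfl | hm
    · have : (m:ℝ) ≤ -1 := by exact_mod_cast hm
      push_cast; nlinarith
    · push_cast; nlinarith
    · have : (1:ℝ) ≤ (m:ℝ) := by exact_mod_cast hm
      push_cast; nlinarith
  · have : (2:ℝ) ≤ (n:ℝ) := by exact_mod_cast hn
    nlinarith [sq_nonneg ((m:ℝ) + n*x), sq_nonneg ((n:ℝ)-2)]

lemma deephole {x y : ℝ} (hxy : 1 ≤ x^2+y^2) (hy : 0 < y) (hx0 : 0 ≤ x) (hx1 : x ≤ 1/2)
    (m n : ℤ) :
    1/4 + ((x^2+y^2-x)/(2*y))^2 ≤ (1/2 + (m:ℝ) + n*x)^2 + ((x^2+y^2-x)/(2*y) + (n:ℝ)*y)^2 := by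
  have hy2 : 3/4 ≤ y^2 := by nlinarith
  set cy : ℝ := (x^2+y^2-x)/(2*y) with hcy
  have hkey : cy * (2*y) = x^2+y^2-x := by
    rw [hcy]; field_simp
  have hcy0 : 0 ≤ cy := by
    have h : 0 ≤ x^2+y^2-x := by nlinarith
    rw [hcy]; exact div_nonneg h (by positivity)
  have hn : n ≤ -2 ∨ n = -1 ∨ n = 0 ∨ 1 ≤ n := by omega
  rcases hn with hn | rfl | rfl | hn
  · have hn' : (n:ℝ) ≤ -2 := by exact_mod_cast hn
    have hcy2 : cy ≤ 2*y := by nlinarith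
    have h1 : (cy - 2*y)^2 ≤ (cy + n*y)^2 := by
      nlinarith [mul_nonneg (show (0:ℝ) ≤ -(((n:ℝ)+2)*y) by nlinarith)
        (show (0:ℝ) ≤ -(2*cy+((n:ℝ)-2)*y) by nlinarith)]
    nlinarith
  · have hm : m ≤ -1 ∨ m = 0 ∨ 1 ≤ m := by omega
    push_cast
    rcases hm with hm | rfl | hm
    · have : (m:ℝ) ≤ -1 := by exact_mod_cast hm
      nlinarith
    · nlinarith
    · have : (1:ℝ) ≤ (m:ℝ) := by exact_mod_cast hm
      nlinarith
  · have hm : m ≤ -1 ∨ 0 ≤ m := by omega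
    push_cast
    rcases hm with hm | hm
    · have : (m:ℝ) ≤ -1 := by exact_mod_cast hm
      nlinarith
    · have : (0:ℝ) ≤ (m:ℝ) := by exact_mod_cast hm
      nlinarith
  · have hn' : (1:ℝ) ≤ (n:ℝ) := by exact_mod_cast hn
    have h1 : (cy + y)^2 ≤ (cy + n*y)^2 := by
      nlinarith [mul_nonneg (show (0:ℝ) ≤ ((n:ℝ)-1)*y by nlinarith)
        (show (0:ℝ) ≤ 2*cy+((n:ℝ)+1)*y by nlinarith)]
    nlinarith

lemma cover_aux {y a b t R2 : ℝ} (hy : 0 < y) (hb0 : 0 ≤ b) (hby : b ≤ y/2)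
    (haR : a^2 ≤ R2) (htR : t^2 ≤ R2)
    (hP : (y^2 + a^2 - t^2)^2 ≤ 4*y^2*(R2 - t^2))
    (hbot : R2 < a^2 + b^2) : (y - b)^2 ≤ R2 - t^2 := by
  set A := Real.sqrt (R2 - a^2) with hA
  set B := Real.sqrt (R2 - t^2) with hB
  have hA2 : A^2 = R2 - a^2 := Real.sq_sqrt (by linarith)
  have hB2 : B^2 = R2 - t^2 := Real.sq_sqrt (by linarith)
  have hA0 : 0 ≤ A := Real.sqrt_nonneg _
  have hB0 : 0 ≤ B := Real.sqrt_nonneg _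
  have h2yB : y^2 + B^2 - A^2 ≤ 2*y*B := by
    nlinarith [mul_nonneg (mul_nonneg (by norm_num : (0:ℝ) ≤ 2) hy.le) hB0]
  have hAB : y ≤ A + B := by nlinarith
  have hbA : A < b := by nlinarith
  have hyb : y - b ≤ B := by linarith
  have hyb0 : 0 ≤ y - b := by linarith
  nlinarith

lemma cover_half {x y : ℝ} (hxy : 1 ≤ x^2+y^2) (hy : 0 < y) (hx0 : 0 ≤ x) (hx1 : x ≤ 1/2)
    (a b : ℝ) (ha : |a| ≤ 1/2) (hb0 : 0 ≤ b) (hby : b ≤ y/2) :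
    ∃ m n : ℤ, (a + (m:ℝ) + n*x)^2 + (b + (n:ℝ)*y)^2 ≤ 1/4 + ((x^2+y^2-x)/(2*y))^2 := by
  have hy2 : 3/4 ≤ y^2 := by nlinarith
  obtain ⟨cy, hcy⟩ : ∃ c : ℝ, c = (x^2+y^2-x)/(2*y) := ⟨_, rfl⟩
  rw [← hcy]
  obtain ⟨R2, hR2⟩ : ∃ c : ℝ, c = 1/4 + cy^2 := ⟨_, rfl⟩
  rw [show (1:ℝ)/4 + cy^2 = R2 from hR2.symm]
  have hkey : cy * (2*y) = x^2+y^2-x := by rw [hcy]; field_simp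
  have hkey2 : 4*y^2*cy^2 = (x^2+y^2-x)^2 := by
    linear_combination (cy*(2*y) + (x^2+y^2-x)) * hkey
  have hcysq : 0 ≤ cy^2 := sq_nonneg _
  have haq : a^2 ≤ 1/4 := by
    rw [abs_le] at ha; nlinarith [ha.1, ha.2]
  rw [abs_le] at ha
  have haR : a^2 ≤ R2 := by rw [hR2]; linarith
  by_cases hbot : a^2 + b^2 ≤ R2
  · exact ⟨0, 0, by push_cast; linarith [hbot]⟩
  · push_neg at hbot
    rcases le_or_gt (x - 1/2) a with hca | hca
    · -- t = a - x, use (m,n) = (0,-1)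
      have htq : (a-x)^2 ≤ 1/4 := by
        nlinarith [mul_nonneg (show (0:ℝ) ≤ 1/2 - (a-x) by linarith [ha.2]) (show (0:ℝ) ≤ (a-x) + 1/2 by linarith)]
      have htR : (a-x)^2 ≤ R2 := by rw [hR2]; linarith
      have hP : (y^2 + a^2 - (a-x)^2)^2 ≤ 4*y^2*(R2 - (a-x)^2) := by
        have hprod : 0 ≤ 4*(x^2+y^2)*((1/2 - a)*(a - x + 1/2)) := by
          apply mul_nonneg (by positivity)
          exact mul_nonneg (by linarith [ha.2]) (by linarith)
        have E : 4*y^2*(R2 - (a-x)^2) - (y^2+a^2-(a-x)^2)^2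
            = 4*(x^2+y^2)*((1/2 - a)*(a - x + 1/2)) := by
          rw [hR2]; linear_combination hkey2
        linarith [E, hprod]
      have hc := cover_aux hy hb0 hby haR htR hP hbot
      have hfin : (a-x)^2 + (y-b)^2 ≤ R2 := by linarith
      exact ⟨0, -1, by push_cast; linarith [hfin]⟩
    · -- t = a - x + 1, use (m,n) = (1,-1)
      have htq : (a-x+1)^2 ≤ 1/4 := by
        nlinarith [mul_nonneg (show (0:ℝ) ≤ 1/2 - (a-x+1) by linarith) (show (0:ℝ) ≤ (a-x+1) + 1/2 by linarith [ha.1])]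
      have htR : (a-x+1)^2 ≤ R2 := by rw [hR2]; linarith
      have hP : (y^2 + a^2 - (a-x+1)^2)^2 ≤ 4*y^2*(R2 - (a-x+1)^2) := by
        have hprod : 0 ≤ 4*((x-1)^2+y^2)*((a + 1/2)*(x - 1/2 - a)) := by
          apply mul_nonneg (by positivity)
          exact mul_nonneg (by linarith [ha.1]) (by linarith)
        have E : 4*y^2*(R2 - (a-x+1)^2) - (y^2+a^2-(a-x+1)^2)^2
            = 4*((x-1)^2+y^2)*((a + 1/2)*(x - 1/2 - a)) := by
          rw [hR2]; linear_combination hkey2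
        linarith [E, hprod]
      have hc := cover_aux hy hb0 hby haR htR hP hbot
      have hfin : (a-x+1)^2 + (y-b)^2 ≤ R2 := by linarith
      exact ⟨1, -1, by push_cast; linarith [hfin]⟩

lemma cover {x y : ℝ} (hxy : 1 ≤ x^2+y^2) (hy : 0 < y) (hx0 : 0 ≤ x) (hx1 : x ≤ 1/2)
    (a b : ℝ) (ha : |a| ≤ 1/2) (hb : |b| ≤ y/2) :
    ∃ m n : ℤ, (a + (m:ℝ) + n*x)^2 + (b + (n:ℝ)*y)^2 ≤ 1/4 + ((x^2+y^2-x)/(2*y))^2 := by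
  rcases le_or_gt 0 b with hb0 | hb0
  · exact cover_half hxy hy hx0 hx1 a b ha hb0 (by rw [abs_le] at hb; exact hb.2)
  · have hb' : |(-b)| ≤ y/2 := by rwa [abs_neg]
    have ha' : |(-a)| ≤ 1/2 := by rwa [abs_neg]
    obtain ⟨m, n, hmn⟩ := cover_half hxy hy hx0 hx1 (-a) (-b) ha' (by linarith)
      (by rw [abs_le] at hb'; exact hb'.2)
    refine ⟨-m, -n, ?_⟩
    push_cast
    linarith [hmn]

lemma region_R2_le_one {x y : ℝ} (hxy : 1 ≤ x^2+y^2) (hy : 0 < y) (hx0 : 0 ≤ x) (hx1 : x ≤ 1/2)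
    (hreg : y < Real.sqrt (1 - (x - 1/2)^2) + Real.sqrt 3 / 2) :
    1/4 + ((x^2+y^2-x)/(2*y))^2 ≤ 1 := by
  have hy2 : 3/4 ≤ y^2 := by nlinarith
  set s := Real.sqrt (1 - (x - 1/2)^2) with hs
  have hs2 : s^2 = 1 - (x-1/2)^2 := Real.sq_sqrt (by nlinarith)
  have hs0 : 0 ≤ s := Real.sqrt_nonneg _
  have h3 : Real.sqrt 3 ^ 2 = 3 := Real.sq_sqrt (by norm_num)
  have h30 : 0 ≤ Real.sqrt 3 := Real.sqrt_nonneg _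
  have hs34 : Real.sqrt 3 / 2 ≤ s := by nlinarith
  have hprod : 0 ≤ (s + Real.sqrt 3/2 - y) * (s - Real.sqrt 3/2 + y) := by
    apply mul_nonneg (by linarith) (by linarith)
  have hkey : x^2 + y^2 - x ≤ Real.sqrt 3 * y := by nlinarith
  have hsq : (x^2+y^2-x)^2 ≤ 3*y^2 := by nlinarith [hkey, hxy, hx1, hy.le]
  have h4 : (x^2+y^2-x)^2/(2*y)^2 ≤ 3/4 := by
    rw [div_le_iff₀ (by positivity)]; nlinarith
  calc 1/4 + ((x^2+y^2-x)/(2*y))^2 = 1/4 + (x^2+y^2-x)^2/(2*y)^2 := by rw [div_pow]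
    _ ≤ 1 := by linarith

set_option maxHeartbeats 1000000 in
theorem two_circles_region_R1 (x y : ℝ) (hxy : 1 ≤ x ^ 2 + y ^ 2) (hy : 0 < y) (hx0 : 0 ≤ x) (hx1 : x ≤ 1 / 2)
    (hreg : y < Real.sqrt (1 - (x - 1 / 2) ^ 2) + Real.sqrt 3 / 2)
    : optRadius x y 2 = Real.sqrt (x ^ 2 + y ^ 2) * Real.sqrt ((x - 1) ^ 2 + y ^ 2) / (4 * y) := by
  have hy2 : 3/4 ≤ y^2 := by nlinarith
  obtain ⟨cy, hcy⟩ : ∃ c : ℝ, c = (x^2+y^2-x)/(2*y) := ⟨_, rfl⟩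
  have hR2le1 : 1/4 + cy^2 ≤ 1 := by
    rw [hcy]; exact region_R2_le_one hxy hy hx0 hx1 hreg
  set r : ℝ := Real.sqrt (x ^ 2 + y ^ 2) * Real.sqrt ((x - 1) ^ 2 + y ^ 2) / (4 * y) with hr
  have hr0 : 0 ≤ r := by positivity
  have hrR : (2*r)^2 = 1/4 + cy^2 := by
    have e1 : Real.sqrt (x^2+y^2) ^ 2 = x^2+y^2 := Real.sq_sqrt (by positivity)
    have e2 : Real.sqrt ((x-1)^2+y^2) ^ 2 = (x-1)^2+y^2 := Real.sq_sqrt (by positivity)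
    have key2 : ((1:ℝ)/4 + cy^2) * (4*y^2) = (x^2+y^2)*((x-1)^2+y^2) := by
      rw [hcy]; field_simp; ring
    have key : (2*r)^2 * (4*y^2) = (x^2+y^2)*((x-1)^2+y^2) := by
      rw [hr]
      field_simp
      linear_combination (4*(Real.sqrt ((x-1)^2+y^2))^2) * e1 + (4*(x^2+y^2)) * e2
    have h4y : (4*y^2) ≠ 0 := by positivity
    exact mul_right_cancel₀ h4y (key.trans key2.symm)
  have hsqrtR : Real.sqrt (1/4 + cy^2) = 2*r := by
    rw [← hrR]; exact Real.sqrt_sq (by linarith)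
  set T := {r' : ℝ | 0 ≤ r' ∧ ∃ p : Fin 2 → EuclideanSpace ℝ (Fin 2), IsPacking x y r' p} with hT
  have hub : ∀ r' ∈ T, r' ≤ r := by
    rintro r' ⟨hr'0, p, hp⟩
    set d : EuclideanSpace ℝ (Fin 2) := p 0 - p 1 with hd
    set n1 : ℤ := -round (d 1 / y) with hn1
    have hb1 : |d 1 + (n1:ℝ)*y| ≤ y/2 := by
      have h := abs_sub_round (d 1 / y)
      have he : d 1 + (n1:ℝ)*y = (d 1 / y - round (d 1 / y)) * y := by
        rw [hn1]; push_cast; rw [sub_mul, div_mul_cancel₀ _ hy.ne']; ring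
      rw [he, abs_mul, abs_of_pos hy]
      calc |d 1/y - (round (d 1/y) : ℝ)| * y ≤ (1/2) * y :=
            mul_le_mul_of_nonneg_right h hy.le
        _ = y/2 := by ring
    set m1 : ℤ := -round (d 0 + (n1:ℝ)*x) with hm1
    have ha : |d 0 + (m1:ℝ) + (n1:ℝ)*x| ≤ 1/2 := by
      have h := abs_sub_round (d 0 + (n1:ℝ)*x)
      have he : d 0 + (m1:ℝ) + (n1:ℝ)*x = (d 0 + (n1:ℝ)*x) - round (d 0 + (n1:ℝ)*x) := by
        rw [hm1]; push_cast; ring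
      rw [he]; exact h
    obtain ⟨m2, n2, hcov⟩ := cover hxy hy hx0 hx1 (d 0 + (m1:ℝ) + (n1:ℝ)*x) (d 1 + (n1:ℝ)*y) ha hb1
    rw [← hcy] at hcov
    set l : EuclideanSpace ℝ (Fin 2) := ((m1+m2 : ℤ):ℝ) • pt 1 0 + ((n1+n2 : ℤ):ℝ) • pt x y with hl
    have hpk := hp 0 1 l ⟨m1+m2, n1+n2, rfl⟩ (Or.inl (by decide))
    have hco0 : (p 0 - p 1 + l) 0 = d 0 + ((m1+m2:ℤ):ℝ) * 1 + ((n1+n2:ℤ):ℝ) * x := by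
      simp [hl, pt, ← hd]
      ring
    have hco1 : (p 0 - p 1 + l) 1 = d 1 + ((m1+m2:ℤ):ℝ) * 0 + ((n1+n2:ℤ):ℝ) * y := by
      simp [hl, pt, ← hd]
    have hnb : ‖p 0 - p 1 + l‖ ≤ 2*r := by
      rw [norm_sq_two, ← hsqrtR]
      apply Real.sqrt_le_sqrt
      rw [hco0, hco1]
      push_cast
      linarith [hcov]
    linarith [hpk, hnb]
  have hmem : r ∈ T := by
    refine ⟨hr0, ![pt 0 0, pt (1/2) cy], ?_⟩
    intro i j l hl' hne'
    obtain ⟨m, n, rfl⟩ := hl'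
    rw [norm_sq_two, ← hsqrtR]
    apply Real.sqrt_le_sqrt
    have hDH := deephole hxy hy hx0 hx1
    have hSV := shortvec hxy hy hx0 hx1
    fin_cases i <;> fin_cases j <;>
      simp only [Fin.zero_eta, Fin.mk_one, Fin.isValue, Matrix.cons_val_zero, Matrix.cons_val_one,
        Matrix.head_cons, ne_eq, not_true] at hne' ⊢
    · -- i = j = 0
      have hl0 : ¬((m:ℝ) • pt 1 0 + (n:ℝ) • pt x y = 0) := by
        rcases hne' with h | h
        · exact h.elim
        · exact h
      have hmn : ¬(m = 0 ∧ n = 0) := by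
        rintro ⟨rfl, rfl⟩
        exact hl0 (by push_cast; simp)
      have h1 := hSV m n hmn
      have hc0 : (pt 0 0 - pt 0 0 + ((m:ℝ) • pt 1 0 + (n:ℝ) • pt x y)) 0 = (m:ℝ) * 1 + (n:ℝ) * x := by
        simp [pt]
      have hc1 : (pt 0 0 - pt 0 0 + ((m:ℝ) • pt 1 0 + (n:ℝ) • pt x y)) 1 = (m:ℝ) * 0 + (n:ℝ) * y := by
        simp [pt]
      rw [hc0, hc1]
      linarith [h1, hR2le1]
    · -- i = 0, j = 1
      have h1 := hDH (-m) (-n)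
      rw [← hcy] at h1
      push_cast at h1
      have hc0 : (pt 0 0 - pt (1/2) cy + ((m:ℝ) • pt 1 0 + (n:ℝ) • pt x y)) 0 = 0 - 1/2 + ((m:ℝ) * 1 + (n:ℝ) * x) := by
        simp [pt]
      have hc1 : (pt 0 0 - pt (1/2) cy + ((m:ℝ) • pt 1 0 + (n:ℝ) • pt x y)) 1 = 0 - cy + ((m:ℝ) * 0 + (n:ℝ) * y) := by
        simp [pt]
      rw [hc0, hc1]
      linarith [h1]
    · -- i = 1, j = 0
      have h1 := hDH m n
      rw [← hcy] at h1
      have hc0 : (pt (1/2) cy - pt 0 0 + ((m:ℝ) • pt 1 0 + (n:ℝ) • pt x y)) 0 = 1/2 - 0 + ((m:ℝ) * 1 + (n:ℝ) * x) := by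
        simp [pt]
      have hc1 : (pt (1/2) cy - pt 0 0 + ((m:ℝ) • pt 1 0 + (n:ℝ) • pt x y)) 1 = cy - 0 + ((m:ℝ) * 0 + (n:ℝ) * y) := by
        simp [pt]
      rw [hc0, hc1]
      linarith [h1]
    · -- i = j = 1
      have hl0 : ¬((m:ℝ) • pt 1 0 + (n:ℝ) • pt x y = 0) := by
        rcases hne' with h | h
        · exact h.elim
        · exact h
      have hmn : ¬(m = 0 ∧ n = 0) := by
        rintro ⟨rfl, rfl⟩
        exact hl0 (by push_cast; simp)
      have h1 := hSV m n hmn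
      have hc0 : (pt (1/2) cy - pt (1/2) cy + ((m:ℝ) • pt 1 0 + (n:ℝ) • pt x y)) 0 = (m:ℝ) * 1 + (n:ℝ) * x := by
        simp [pt]
      have hc1 : (pt (1/2) cy - pt (1/2) cy + ((m:ℝ) • pt 1 0 + (n:ℝ) • pt x y)) 1 = (m:ℝ) * 0 + (n:ℝ) * y := by
        simp [pt]
      rw [hc0, hc1]
      linarith [h1, hR2le1]
  have hbdd : BddAbove T := ⟨r, fun z hz => hub z hz⟩
  rw [show optRadius x y 2 = sSup T from rfl]
  exact le_antisymm (csSup_le ⟨r, hmem⟩ hub) (le_csSup hbdd hmem)
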